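/- Let G be a connected graph on n ≥ 2 vertices, let φ be a multicommodity flow on G sending at least one unit of flow between every pair of distinct vertices, and let (A,B,S) be a vertex cut of G. Then max_{v∈V} cong(v) ≥ (|A|·|B| + (1/2)|S|(n-1)) / |S| ≥ (1/4)·|A∪S|·|B∪S| / |S|. Consequently vcong(G) ≥ 1/(4·vspars(G)). -/
import Mathlib


open Finset

variable {V : Type*} [Fintype V] [DecidableEq V] [LinearOrder V]

/-- The congestion of a vertex `w` under a multicommodity flow `φ` (assigning a nonnegative
value to each path of `G`; pairs of vertices are represented by ordered pairs `u < v`):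
each path through `w` contributes `φ(P)` if `w` is interior, and `φ(P)/2` if `w` is an
endpoint. -/
noncomputable def vertexCong (G : SimpleGraph V) [DecidableRel G.Adj]
    (φ : ∀ u v : V, G.Path u v → ℝ) (w : V) : ℝ :=
  ∑ p ∈ Finset.univ.filter (fun p : V × V => p.1 < p.2),
    ∑ P : G.Path p.1 p.2,
      (if w ∈ (P : G.Walk p.1 p.2).support then
        (if w = p.1 ∨ w = p.2 then (1 : ℝ) / 2 else 1) else 0) * φ p.1 p.2 P

/-- `φ` is a multicommodity flow sending at least one unit of flow between every pair of
distinct vertices. -/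
def IsUnitFlow (G : SimpleGraph V) [DecidableRel G.Adj]
    (φ : ∀ u v : V, G.Path u v → ℝ) : Prop :=
  (∀ u v (P : G.Path u v), 0 ≤ φ u v P) ∧
  (∀ u v : V, u < v → 1 ≤ ∑ P : G.Path u v, φ u v P)

/-- `(A,B,S)` is a vertex cut of `G`: a partition of the vertices with `A`, `B` nonempty
and no edges between `A` and `B`. -/
def IsVertexCut (G : SimpleGraph V) (A B S : Finset V) : Prop :=
  A.Nonempty ∧ B.Nonempty ∧ Disjoint A B ∧ Disjoint A S ∧ Disjoint B S ∧
    A ∪ B ∪ S = Finset.univ ∧ ∀ a ∈ A, ∀ b ∈ B, ¬ G.Adj a b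

/-- The vertex sparsity of `G`: the infimum of `|S|/(|A∪S|·|B∪S|)` over vertex cuts. -/
noncomputable def vertexSparsity (G : SimpleGraph V) : ℝ :=
  sInf {r : ℝ | ∃ A B S : Finset V, IsVertexCut G A B S ∧
    r = (S.card : ℝ) / (((A ∪ S).card : ℝ) * ((B ∪ S).card : ℝ))}

/-- The vertex congestion of `G`: the infimum over unit multicommodity flows `φ` of the
maximum vertex congestion under `φ`. -/
noncomputable def vertexCongG (G : SimpleGraph V) [DecidableRel G.Adj] : ℝ :=
  sInf {r : ℝ | ∃ φ : ∀ u v : V, G.Path u v → ℝ, IsUnitFlow G φ ∧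
    r = sSup {x : ℝ | ∃ w : V, x = vertexCong G φ w}}


set_option linter.unusedSectionVars false


lemma walk_hits_aux (G : SimpleGraph V) (A B S : Finset V)
    (hAB : Disjoint A B) (hU : A ∪ B ∪ S = Finset.univ)
    (hE : ∀ a ∈ A, ∀ b ∈ B, ¬ G.Adj a b) :
    ∀ {a b : V} (W : G.Walk a b), a ∈ A → b ∈ B → ∃ w ∈ S, w ∈ W.support := by
  intro a b W
  induction W with
  | nil => intro ha hb; exact absurd hb (Finset.disjoint_left.mp hAB ha)
  | @cons a c b h W ih =>
    intro ha hb
    have hc : c ∈ A ∪ B ∪ S := hU ▸ Finset.mem_univ c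
    rcases Finset.mem_union.mp hc with hc | hc
    · rcases Finset.mem_union.mp hc with hc | hc
      · obtain ⟨w, hwS, hwsup⟩ := ih hc hb
        exact ⟨w, hwS, by simp [SimpleGraph.Walk.support_cons, hwsup]⟩
      · exact absurd h (hE a ha c hc)
    · exact ⟨c, hc, by simp [SimpleGraph.Walk.support_cons]⟩

noncomputable def gfun (A B S : Finset V) (p : V × V) : ℝ :=
  (if p.1 ∈ A then (1:ℝ) else 0) * (if p.2 ∈ B then (1:ℝ) else 0)
    + (1/2) * (if p.1 ∈ S then (1:ℝ) else 0)

lemma gfun_nonneg (A B S : Finset V) (p : V × V) : 0 ≤ gfun A B S p := by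
  unfold gfun; split_ifs <;> norm_num

lemma sum_lt_swap (f : V × V → ℝ) :
    ∑ p ∈ univ.filter (fun p : V × V => p.1 < p.2), (f p + f p.swap)
      = ∑ p ∈ univ.filter (fun p : V × V => p.1 ≠ p.2), f p := by
  rw [Finset.sum_add_distrib]
  have h2 : ∑ p ∈ univ.filter (fun p : V × V => p.1 < p.2), f p.swap
      = ∑ p ∈ univ.filter (fun p : V × V => p.2 < p.1), f p :=
    Finset.sum_nbij' Prod.swap Prod.swap (by simp) (by simp) (by simp) (by simp)
      (fun a _ => rfl)
  rw [h2, ← Finset.sum_union]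
  · apply Finset.sum_congr _ (fun _ _ => rfl)
    ext p
    simp only [Finset.mem_union, Finset.mem_filter, Finset.mem_univ, true_and]
    constructor
    · rintro (h | h)
      exacts [ne_of_lt h, (ne_of_lt h).symm]
    · intro h; exact h.lt_or_gt
  · rw [Finset.disjoint_left]
    rintro p hp hp'
    simp only [Finset.mem_filter] at hp hp'
    exact absurd hp'.2 (not_lt.mpr hp.2.le)

lemma sum_ind (C : Finset V) : ∑ u, (if u ∈ C then (1:ℝ) else 0) = C.card := by
  simp [Finset.sum_ite_mem]

lemma sum_gfun (A B S : Finset V) (hAB : Disjoint A B) :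
    ∑ p ∈ univ.filter (fun p : V × V => p.1 < p.2), (gfun A B S p + gfun A B S p.swap)
      = (A.card : ℝ) * B.card + (1/2) * S.card * ((Fintype.card V : ℝ) - 1) := by
  rw [sum_lt_swap]
  unfold gfun
  rw [Finset.sum_add_distrib]
  have h1 : ∑ p ∈ univ.filter (fun p : V × V => p.1 ≠ p.2),
      (if p.1 ∈ A then (1:ℝ) else 0) * (if p.2 ∈ B then (1:ℝ) else 0)
      = (A.card : ℝ) * B.card := by
    rw [Finset.sum_filter_of_ne]
    · have key : ∑ x : V, ∑ y : V,
          ((if x ∈ A then (1:ℝ) else 0) * (if y ∈ B then (1:ℝ) else 0))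
          = (A.card : ℝ) * B.card := by
        rw [← Finset.sum_mul_sum, sum_ind, sum_ind]
      rw [Fintype.sum_prod_type]
      exact key
    · intro p _ hne
      intro heq
      apply hne
      by_cases h1 : p.1 ∈ A
      · by_cases h2 : p.2 ∈ B
        · exact absurd (heq ▸ h2) (Finset.disjoint_left.mp hAB h1)
        · simp [h2]
      · simp [h1]
  have hdiag : ∑ p ∈ univ.filter (fun p : V × V => ¬ p.1 ≠ p.2),
      (if p.1 ∈ S then (1:ℝ) else 0) = S.card := by
    rw [← sum_ind S]
    refine Finset.sum_nbij' (fun p => p.1) (fun u => (u, u)) (by simp) (by simp) ?_ (by simp)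
      (fun a _ => rfl)
    intro p hp
    simp only [Finset.mem_filter, not_ne_iff] at hp
    exact Prod.ext rfl hp.2
  have hall : ∑ p : V × V, (if p.1 ∈ S then (1:ℝ) else 0)
      = (Fintype.card V : ℝ) * S.card := by
    have key : ∑ x : V, ∑ _y : V, (if x ∈ S then (1:ℝ) else 0)
        = (Fintype.card V : ℝ) * S.card := by
      simp only [Finset.sum_const, Finset.card_univ, nsmul_eq_mul]
      rw [← Finset.mul_sum, sum_ind]
    rw [Fintype.sum_prod_type]
    exact key
  have hsplit := Finset.sum_filter_add_sum_filter_not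
    (univ : Finset (V × V)) (fun p : V × V => p.1 ≠ p.2)
    (fun p : V × V => if p.1 ∈ S then (1:ℝ) else 0)
  have h2 : ∑ p ∈ univ.filter (fun p : V × V => p.1 ≠ p.2),
      (if p.1 ∈ S then (1:ℝ) else 0)
      = (Fintype.card V : ℝ) * S.card - S.card := by
    rw [← hall, ← hsplit, hdiag]; ring
  have h3 : ∑ p ∈ univ.filter (fun p : V × V => p.1 ≠ p.2),
      (1/2) * (if p.1 ∈ S then (1:ℝ) else 0)
      = (1/2) * S.card * ((Fintype.card V : ℝ) - 1) := by
    rw [← Finset.mul_sum, h2]; ring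
  rw [h1, h3]

lemma weight_ge (G : SimpleGraph V) (A B S : Finset V)
    (hAB : Disjoint A B) (hAS : Disjoint A S) (hBS : Disjoint B S)
    (hU : A ∪ B ∪ S = Finset.univ) (hE : ∀ a ∈ A, ∀ b ∈ B, ¬ G.Adj a b)
    {u v : V} (huv : u ≠ v) (P : G.Walk u v) :
    gfun A B S (u, v) + gfun A B S (v, u) ≤
      ∑ w ∈ S, (if w ∈ P.support then (if w = u ∨ w = v then (1:ℝ)/2 else 1) else 0) := by
  have hnn : ∀ w ∈ S,
      0 ≤ (if w ∈ P.support then (if w = u ∨ w = v then (1:ℝ)/2 else 1) else 0) := by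
    intro w _; split_ifs <;> norm_num
  by_cases hu : u ∈ S <;> by_cases hv : v ∈ S
  · -- both endpoints in S
    have huA : u ∉ A := fun h => Finset.disjoint_left.mp hAS h hu
    have hvA : v ∉ A := fun h => Finset.disjoint_left.mp hAS h hv
    have hsub : ({u, v} : Finset V) ⊆ S := by
      intro x hx; rcases Finset.mem_insert.mp hx with h | h
      · exact h ▸ hu
      · exact (Finset.mem_singleton.mp h) ▸ hv
    have hle := Finset.sum_le_sum_of_subset_of_nonneg hsub (fun w hw _ => hnn w hw)
    rw [Finset.sum_pair huv] at hle
    simp only [SimpleGraph.Walk.start_mem_support, SimpleGraph.Walk.end_mem_support,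
      if_true, true_or, or_true] at hle
    simp only [gfun, huA, hvA, hu, hv, if_true, if_false]
    linarith
  · have huA : u ∉ A := fun h => Finset.disjoint_left.mp hAS h hu
    have huB : u ∉ B := fun h => Finset.disjoint_left.mp hBS h hu
    have hle := Finset.single_le_sum hnn hu
    simp only [SimpleGraph.Walk.start_mem_support, if_true, true_or] at hle
    simp only [gfun, huA, huB, hu, hv, if_true, if_false]
    linarith
  · have hvA : v ∉ A := fun h => Finset.disjoint_left.mp hAS h hv
    have hvB : v ∉ B := fun h => Finset.disjoint_left.mp hBS h hv
    have hle := Finset.single_le_sum hnn hv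
    simp only [SimpleGraph.Walk.end_mem_support, if_true, or_true] at hle
    simp only [gfun, hvA, hvB, hu, hv, if_true, if_false]
    linarith
  · have humem : u ∈ A ∪ B := by
      have : u ∈ A ∪ B ∪ S := hU ▸ Finset.mem_univ u
      rcases Finset.mem_union.mp this with h | h
      · exact h
      · exact absurd h hu
    have hvmem : v ∈ A ∪ B := by
      have : v ∈ A ∪ B ∪ S := hU ▸ Finset.mem_univ v
      rcases Finset.mem_union.mp this with h | h
      · exact h
      · exact absurd h hv
    rcases Finset.mem_union.mp humem with hua | hub <;>
      rcases Finset.mem_union.mp hvmem with hva | hvb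
    · -- both in A
      have huB : u ∉ B := fun h => Finset.disjoint_left.mp hAB hua h
      have hvB : v ∉ B := fun h => Finset.disjoint_left.mp hAB hva h
      simp only [gfun, huB, hvB, hu, hv, if_false]
      have := Finset.sum_nonneg hnn
      linarith
    · -- u ∈ A, v ∈ B : crossing
      obtain ⟨w, hwS, hwsup⟩ := walk_hits_aux G A B S hAB hU hE P hua hvb
      have hwu : w ≠ u := fun h => Finset.disjoint_left.mp hAS (h ▸ hua) hwS
      have hwv : w ≠ v := fun h => Finset.disjoint_left.mp hBS (h ▸ hvb) hwS
      have hle := Finset.single_le_sum hnn hwS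
      simp only [hwsup, hwu, hwv, if_true, if_false, or_self] at hle
      have hvA : v ∉ A := fun h => Finset.disjoint_left.mp hAB h hvb
      simp only [gfun, hua, hvb, hvA, hu, hv, if_true, if_false]
      linarith
    · -- u ∈ B, v ∈ A : crossing (reverse)
      obtain ⟨w, hwS, hwsup⟩ := walk_hits_aux G A B S hAB hU hE P.reverse hva hub
      rw [SimpleGraph.Walk.support_reverse, List.mem_reverse] at hwsup
      have hwu : w ≠ u := fun h => Finset.disjoint_left.mp hBS (h ▸ hub) hwS
      have hwv : w ≠ v := fun h => Finset.disjoint_left.mp hAS (h ▸ hva) hwS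
      have hle := Finset.single_le_sum hnn hwS
      simp only [hwsup, hwu, hwv, if_true, if_false, or_self] at hle
      have huA : u ∉ A := fun h => Finset.disjoint_left.mp hAB h hub
      simp only [gfun, hva, hub, huA, hu, hv, if_true, if_false]
      linarith
    · -- both in B
      have huA : u ∉ A := fun h => Finset.disjoint_left.mp hAB h hub
      have hvA : v ∉ A := fun h => Finset.disjoint_left.mp hAB h hvb
      simp only [gfun, huA, hvA, hu, hv, if_false]
      have := Finset.sum_nonneg hnn
      linarith


lemma core_bound (G : SimpleGraph V) [DecidableRel G.Adj]
    (φ : ∀ u v : V, G.Path u v → ℝ) (hφ : IsUnitFlow G φ)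
    (A B S : Finset V) (hcut : IsVertexCut G A B S) :
    (A.card : ℝ) * B.card + (1/2) * S.card * ((Fintype.card V : ℝ) - 1)
      ≤ ∑ w ∈ S, vertexCong G φ w := by
  obtain ⟨hA, hB, hAB, hAS, hBS, hU, hE⟩ := hcut
  have key : ∀ p ∈ univ.filter (fun p : V × V => p.1 < p.2),
      gfun A B S p + gfun A B S p.swap ≤
        ∑ w ∈ S, ∑ P : G.Path p.1 p.2,
          (if w ∈ (P : G.Walk p.1 p.2).support then
            (if w = p.1 ∨ w = p.2 then (1:ℝ)/2 else 1) else 0) * φ p.1 p.2 P := by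
    intro p hp
    simp only [Finset.mem_filter] at hp
    have hne : p.1 ≠ p.2 := ne_of_lt hp.2
    have hg0 : 0 ≤ gfun A B S p + gfun A B S p.swap :=
      add_nonneg (gfun_nonneg _ _ _ _) (gfun_nonneg _ _ _ _)
    calc gfun A B S p + gfun A B S p.swap
        = (gfun A B S p + gfun A B S p.swap) * 1 := (mul_one _).symm
      _ ≤ (gfun A B S p + gfun A B S p.swap) * ∑ P : G.Path p.1 p.2, φ p.1 p.2 P :=
          mul_le_mul_of_nonneg_left (hφ.2 p.1 p.2 hp.2) hg0
      _ = ∑ P : G.Path p.1 p.2, (gfun A B S p + gfun A B S p.swap) * φ p.1 p.2 P :=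
          Finset.mul_sum _ _ _
      _ ≤ ∑ P : G.Path p.1 p.2,
            (∑ w ∈ S, (if w ∈ (P : G.Walk p.1 p.2).support then
              (if w = p.1 ∨ w = p.2 then (1:ℝ)/2 else 1) else 0)) * φ p.1 p.2 P := by
          apply Finset.sum_le_sum
          intro P _
          apply mul_le_mul_of_nonneg_right _ (hφ.1 p.1 p.2 P)
          exact weight_ge G A B S hAB hAS hBS hU hE hne (P : G.Walk p.1 p.2)
      _ = ∑ w ∈ S, ∑ P : G.Path p.1 p.2,
            (if w ∈ (P : G.Walk p.1 p.2).support then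
              (if w = p.1 ∨ w = p.2 then (1:ℝ)/2 else 1) else 0) * φ p.1 p.2 P := by
          simp_rw [Finset.sum_mul]
          rw [Finset.sum_comm]
  calc (A.card : ℝ) * B.card + (1/2) * S.card * ((Fintype.card V : ℝ) - 1)
      = ∑ p ∈ univ.filter (fun p : V × V => p.1 < p.2),
          (gfun A B S p + gfun A B S p.swap) := (sum_gfun A B S hAB).symm
    _ ≤ ∑ p ∈ univ.filter (fun p : V × V => p.1 < p.2),
          ∑ w ∈ S, ∑ P : G.Path p.1 p.2,
            (if w ∈ (P : G.Walk p.1 p.2).support then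
              (if w = p.1 ∨ w = p.2 then (1:ℝ)/2 else 1) else 0) * φ p.1 p.2 P :=
        Finset.sum_le_sum key
    _ = ∑ w ∈ S, vertexCong G φ w := by
        unfold vertexCong
        rw [Finset.sum_comm]

lemma cut_S_nonempty (G : SimpleGraph V) (hconn : G.Connected)
    (A B S : Finset V) (hcut : IsVertexCut G A B S) : S.Nonempty := by
  obtain ⟨⟨a, ha⟩, ⟨b, hb⟩, hAB, hAS, hBS, hU, hE⟩ := hcut
  obtain ⟨W⟩ := hconn.preconnected a b
  obtain ⟨w, hwS, -⟩ := walk_hits_aux G A B S hAB hU hE W ha hb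
  exact ⟨w, hwS⟩

lemma part1 (G : SimpleGraph V) [DecidableRel G.Adj] (hconn : G.Connected)
    (φ : ∀ u v : V, G.Path u v → ℝ) (hφ : IsUnitFlow G φ)
    (A B S : Finset V) (hcut : IsVertexCut G A B S) :
    ∃ w : V, ((A.card : ℝ) * B.card + (1/2) * S.card * ((Fintype.card V : ℝ) - 1)) / S.card
      ≤ vertexCong G φ w := by
  have hSne := cut_S_nonempty G hconn A B S hcut
  have hS0 : (0:ℝ) < S.card := by exact_mod_cast Finset.card_pos.mpr hSne
  have hsum := core_bound G φ hφ A B S hcut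
  have hle : ∑ _w ∈ S,
      (((A.card : ℝ) * B.card + (1/2) * S.card * ((Fintype.card V : ℝ) - 1)) / S.card)
      ≤ ∑ w ∈ S, vertexCong G φ w := by
    rw [Finset.sum_const, nsmul_eq_mul, mul_comm, div_mul_cancel₀ _ (ne_of_gt hS0)]
    exact hsum
  obtain ⟨w, _, hw⟩ := Finset.exists_le_of_sum_le hSne hle
  exact ⟨w, hw⟩

lemma part2 (G : SimpleGraph V) (hconn : G.Connected)
    (A B S : Finset V) (hcut : IsVertexCut G A B S) :
    (1/4) * (((A ∪ S).card : ℝ) * ((B ∪ S).card : ℝ)) / S.card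
      ≤ ((A.card : ℝ) * B.card + (1/2) * S.card * ((Fintype.card V : ℝ) - 1)) / S.card := by
  have hSne := cut_S_nonempty G hconn A B S hcut
  obtain ⟨hA, hB, hAB, hAS, hBS, hU, hE⟩ := hcut
  have hS0 : (0:ℝ) < S.card := by exact_mod_cast Finset.card_pos.mpr hSne
  have ha : (1:ℝ) ≤ A.card := by exact_mod_cast Finset.card_pos.mpr hA
  have hb : (1:ℝ) ≤ B.card := by exact_mod_cast Finset.card_pos.mpr hB
  have hs : (1:ℝ) ≤ S.card := by exact_mod_cast Finset.card_pos.mpr hSne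
  have hAScard : ((A ∪ S).card : ℝ) = A.card + S.card := by
    rw [Finset.card_union_of_disjoint hAS]; push_cast; ring
  have hBScard : ((B ∪ S).card : ℝ) = B.card + S.card := by
    rw [Finset.card_union_of_disjoint hBS]; push_cast; ring
  have hncard : (Fintype.card V : ℝ) = A.card + B.card + S.card := by
    rw [← Finset.card_univ, ← hU,
      Finset.card_union_of_disjoint (Finset.disjoint_union_left.mpr ⟨hAS, hBS⟩),
      Finset.card_union_of_disjoint hAB]
    push_cast; ring
  rw [div_le_div_iff₀ hS0 hS0, hAScard, hBScard, hncard]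
  nlinarith [mul_nonneg (by linarith : (0:ℝ) ≤ S.card) (by linarith : (0:ℝ) ≤ (A.card:ℝ) - 1),
    mul_nonneg (by linarith : (0:ℝ) ≤ S.card) (by linarith : (0:ℝ) ≤ (B.card:ℝ) - 1),
    mul_nonneg (by linarith : (0:ℝ) ≤ (A.card:ℝ) - 1) (by linarith : (0:ℝ) ≤ (B.card:ℝ) - 1),
    sq_nonneg ((S.card:ℝ)), hS0.le, mul_pos hS0 hS0]

/-- If `G` is connected on `n ≥ 2` vertices, `φ` sends a unit of flow between every pair of
vertices, and `(A,B,S)` is a vertex cut, then some vertex has congestion at least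
`(|A|·|B| + ½|S|(n-1))/|S| ≥ ¼·|A∪S|·|B∪S|/|S|`; consequently
`vcong(G) ≥ 1/(4·vspars(G))`. -/
theorem stmt_14 (G : SimpleGraph V) [DecidableRel G.Adj] (hconn : G.Connected)
    (n : ℕ) (hn : Fintype.card V = n) (hn2 : 2 ≤ n)
    (φ : ∀ u v : V, G.Path u v → ℝ) (hφ : IsUnitFlow G φ)
    (A B S : Finset V) (hcut : IsVertexCut G A B S) :
    (∃ w : V, ((A.card : ℝ) * (B.card : ℝ) + (1 / 2) * (S.card : ℝ) * ((n : ℝ) - 1))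
        / (S.card : ℝ) ≤ vertexCong G φ w) ∧
    (1 / 4) * (((A ∪ S).card : ℝ) * ((B ∪ S).card : ℝ)) / (S.card : ℝ)
        ≤ ((A.card : ℝ) * (B.card : ℝ) + (1 / 2) * (S.card : ℝ) * ((n : ℝ) - 1))
        / (S.card : ℝ) ∧
    1 / (4 * vertexSparsity G) ≤ vertexCongG G := by
  subst hn
  refine ⟨ ?_, ?_, ?_⟩
  · exact part1 G hconn φ hφ A B S hcut
  · exact part2 G hconn A B S hcut
  · have hTne : ∃ r, r ∈ {r : ℝ | ∃ A B S : Finset V, IsVertexCut G A B S ∧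
        r = (S.card : ℝ) / (((A ∪ S).card : ℝ) * ((B ∪ S).card : ℝ))} :=
      ⟨_, A, B, S, hcut, rfl⟩
    have hTfin : {r : ℝ | ∃ A B S : Finset V, IsVertexCut G A B S ∧
        r = (S.card : ℝ) / (((A ∪ S).card : ℝ) * ((B ∪ S).card : ℝ))}.Finite := by
      apply Set.Finite.subset (Set.finite_range (fun t : Finset V × Finset V × Finset V =>
        (t.2.2.card : ℝ) / (((t.1 ∪ t.2.2).card : ℝ) * ((t.2.1 ∪ t.2.2).card : ℝ))))
      rintro r ⟨A', B', S', -, rfl⟩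
      exact ⟨(A', B', S'), rfl⟩
    have hmem : vertexSparsity G ∈ {r : ℝ | ∃ A B S : Finset V, IsVertexCut G A B S ∧
        r = (S.card : ℝ) / (((A ∪ S).card : ℝ) * ((B ∪ S).card : ℝ))} :=
      Set.Nonempty.csInf_mem hTne hTfin
    obtain ⟨A₀, B₀, S₀, hcut₀, heq⟩ := hmem
    have hS₀ne := cut_S_nonempty G hconn A₀ B₀ S₀ hcut₀
    have hS₀ : (0:ℝ) < S₀.card := by exact_mod_cast Finset.card_pos.mpr hS₀ne
    have hx : (0:ℝ) < ((A₀ ∪ S₀).card : ℝ) := by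
      exact_mod_cast Finset.card_pos.mpr (Finset.Nonempty.mono Finset.subset_union_right hS₀ne)
    have hy : (0:ℝ) < ((B₀ ∪ S₀).card : ℝ) := by
      exact_mod_cast Finset.card_pos.mpr (Finset.Nonempty.mono Finset.subset_union_right hS₀ne)
    have hrw : 1 / (4 * vertexSparsity G)
        = (1/4) * (((A₀ ∪ S₀).card : ℝ) * ((B₀ ∪ S₀).card : ℝ)) / S₀.card := by
      rw [heq]
      field_simp
    rw [hrw, vertexCongG]
    refine le_csInf ⟨sSup {x : ℝ | ∃ w, x = vertexCong G φ w}, φ, hφ, rfl⟩ ?_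
    rintro r ⟨ψ, hψ, rfl⟩
    obtain ⟨w, hw⟩ := part1 G hconn ψ hψ A₀ B₀ S₀ hcut₀
    have h2 := part2 G hconn A₀ B₀ S₀ hcut₀
    have hle : vertexCong G ψ w ≤ sSup {x : ℝ | ∃ w, x = vertexCong G ψ w} := by
      apply le_csSup
      · apply Set.Finite.bddAbove
        apply Set.Finite.subset (Set.finite_range (vertexCong G ψ))
        rintro x ⟨w', rfl⟩
        exact ⟨w', rfl⟩
      · exact ⟨w, rfl⟩
    linarith
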